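/- arXiv:2112.15316 — 5 statements merged into one kernel-verified Lean document; each statement's English description precedes it below -/
import Mathlib

section
/- Let (ŷ, τ̂) with τ̂ > 0, together with multipliers (ν̂, ξ̂, ω̂), satisfy the KKT conditions of the HQP: Cŷ + τ̂c + Eᵀν̂ − ξ̂ = 0, θτ̂ − θ + cᵀŷ − fᵀν̂ − ω̂ = 0, Eŷ = fτ̂, 0 ≤ ŷ ⊥ ξ̂ ≥ 0, 0 ≤ τ̂ ⊥ ω̂ ≥ 0. Then (y*, ν*, ξ*) = (ŷ/τ̂, ν̂/τ̂, ξ̂/τ̂) satisfies the KKT conditions of the QP: Cy* + c + Eᵀν* − ξ* = 0, Ey* = f, 0 ≤ y* ⊥ ξ* ≥ 0. -/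
open Matrix

/-- Dividing an HQP KKT point with τ̂ > 0 by τ̂ yields a QP KKT point. -/
theorem hqp_kkt_to_qp_kkt (n m : ℕ) (C : Matrix (Fin n) (Fin n) ℝ) (hC : C.IsSymm)
    (c : Fin n → ℝ) (E : Matrix (Fin m) (Fin n) ℝ) (f : Fin m → ℝ)
    (θ : ℝ) (hθ : 0 < θ)
    (yh : Fin n → ℝ) (τh : ℝ) (νh : Fin m → ℝ) (ξh : Fin n → ℝ) (ωh : ℝ)
    (hτ : 0 < τh)
    (hdual1 : C *ᵥ yh + τh • c + Eᵀ *ᵥ νh - ξh = 0)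
    (hdual2 : θ * τh - θ + c ⬝ᵥ yh - f ⬝ᵥ νh - ωh = 0)
    (heq : E *ᵥ yh = τh • f)
    (hy : 0 ≤ yh) (hξ : 0 ≤ ξh) (hcompl : yh ⬝ᵥ ξh = 0)
    (hω : 0 ≤ ωh) (hcomplτ : τh * ωh = 0) :
    C *ᵥ (τh⁻¹ • yh) + c + Eᵀ *ᵥ (τh⁻¹ • νh) - τh⁻¹ • ξh = 0 ∧
    E *ᵥ (τh⁻¹ • yh) = f ∧
    0 ≤ τh⁻¹ • yh ∧ 0 ≤ τh⁻¹ • ξh ∧ (τh⁻¹ • yh) ⬝ᵥ (τh⁻¹ • ξh) = 0 := by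
  have hτ' : τh ≠ 0 := ne_of_gt hτ
  have hinv : 0 ≤ τh⁻¹ := le_of_lt (inv_pos.mpr hτ)
  refine ⟨?_, ?_, ?_, ?_, ?_⟩
  · have := congrArg (fun v => τh⁻¹ • v) hdual1
    simp only [smul_add, smul_sub, smul_zero, mulVec_smul, smul_smul,
      inv_mul_cancel₀ hτ', one_smul] at this
    rw [← mulVec_smul, ← mulVec_smul] at this
    linear_combination (norm := module) this
  · have := congrArg (fun v => τh⁻¹ • v) heq
    simp only [smul_smul, inv_mul_cancel₀ hτ', one_smul] at this
    rw [← mulVec_smul] at this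
    exact this
  · exact smul_nonneg hinv hy
  · exact smul_nonneg hinv hξ
  · rw [dotProduct_smul, smul_dotProduct, hcompl]
    simp
end

section
/- Suppose (y*, ν*, ξ*) satisfies the QP KKT conditions and θ + 2cᵀy* + (y*)ᵀCy* > 0, θ > 0. Define τ̄ = θ/(θ + cᵀy* − fᵀν*). Then τ̄ > 0 and (ŷ, τ̂, ν̂, ξ̂, ω̂) = (τ̄y*, τ̄, τ̄ν*, τ̄ξ*, 0) satisfies the HQP KKT conditions: Cŷ + τ̂c + Eᵀν̂ − ξ̂ = 0, θτ̂ − θ + cᵀŷ − fᵀν̂ − ω̂ = 0, Eŷ = fτ̂, 0 ≤ ŷ ⊥ ξ̂ ≥ 0, 0 ≤ τ̂ ⊥ ω̂ ≥ 0. -/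
open Matrix

/-- Scaling a QP KKT point by τ̄ = θ/(θ + cᵀy* − fᵀν*) produces an HQP KKT point
with τ̂ = τ̄ > 0. -/
theorem qp_kkt_to_hqp_kkt (n m : ℕ) (C : Matrix (Fin n) (Fin n) ℝ) (hC : C.IsSymm)
    (c : Fin n → ℝ) (E : Matrix (Fin m) (Fin n) ℝ) (f : Fin m → ℝ)
    (θ : ℝ) (hθ : 0 < θ)
    (ys : Fin n → ℝ) (νs : Fin m → ℝ) (ξs : Fin n → ℝ)
    (hdual : C *ᵥ ys + c + Eᵀ *ᵥ νs - ξs = 0)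
    (heq : E *ᵥ ys = f)
    (hy : 0 ≤ ys) (hξ : 0 ≤ ξs) (hcompl : ys ⬝ᵥ ξs = 0)
    (hpos : 0 < θ + 2 * (c ⬝ᵥ ys) + ys ⬝ᵥ (C *ᵥ ys)) :
    let τb : ℝ := θ / (θ + c ⬝ᵥ ys - f ⬝ᵥ νs)
    0 < τb ∧
    C *ᵥ (τb • ys) + τb • c + Eᵀ *ᵥ (τb • νs) - τb • ξs = 0 ∧
    θ * τb - θ + c ⬝ᵥ (τb • ys) - f ⬝ᵥ (τb • νs) - 0 = 0 ∧
    E *ᵥ (τb • ys) = τb • f ∧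
    0 ≤ τb • ys ∧ 0 ≤ τb • ξs ∧ (τb • ys) ⬝ᵥ (τb • ξs) = 0 ∧
    0 ≤ τb ∧ 0 ≤ (0 : ℝ) ∧ τb * 0 = 0 := by
  intro τb
  -- key identity: f ⬝ᵥ νs = -(ys ⬝ᵥ (C *ᵥ ys) + c ⬝ᵥ ys)
  have hdot : ys ⬝ᵥ (C *ᵥ ys + c + Eᵀ *ᵥ νs - ξs) = 0 := by rw [hdual]; simp
  have hEν : ys ⬝ᵥ (Eᵀ *ᵥ νs) = f ⬝ᵥ νs := by
    rw [dotProduct_mulVec, vecMul_transpose, heq]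
  have hkey : f ⬝ᵥ νs = -(ys ⬝ᵥ (C *ᵥ ys) + c ⬝ᵥ ys) := by
    have := hdot
    simp only [dotProduct_sub, dotProduct_add, hEν, hcompl] at this
    linarith [dotProduct_comm ys c]
  have hden : θ + c ⬝ᵥ ys - f ⬝ᵥ νs = θ + 2 * (c ⬝ᵥ ys) + ys ⬝ᵥ (C *ᵥ ys) := by
    rw [hkey]; ring
  have hτ : 0 < τb := by
    have : 0 < θ + c ⬝ᵥ ys - f ⬝ᵥ νs := hden ▸ hpos
    exact div_pos hθ this
  have hτne : (θ + c ⬝ᵥ ys - f ⬝ᵥ νs) ≠ 0 := by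
    have : 0 < θ + c ⬝ᵥ ys - f ⬝ᵥ νs := hden ▸ hpos
    linarith [dotProduct_comm ys c]
  refine ⟨hτ, ?_, ?_, ?_, ?_, ?_, ?_, le_of_lt hτ, le_refl 0, mul_zero _⟩
  · rw [mulVec_smul, mulVec_smul, ← smul_add, ← smul_add, ← smul_sub, hdual, smul_zero]
  · have : θ * τb - θ + τb * (c ⬝ᵥ ys) - τb * (f ⬝ᵥ νs) - 0 = 0 := by
      have : τb * (θ + c ⬝ᵥ ys - f ⬝ᵥ νs) = θ := div_mul_cancel₀ θ hτne
      nlinarith [this]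
    simpa [dotProduct_smul, smul_eq_mul] using this
  · rw [mulVec_smul, heq]
  · exact smul_nonneg (le_of_lt hτ) hy
  · exact smul_nonneg (le_of_lt hτ) hξ
  · simp [dotProduct_smul, smul_dotProduct, hcompl]
end

section
/- Suppose (ν°, ξ°) is a certificate of infeasibility of the QP, i.e., Eᵀν° − ξ° = 0, ξ° ≥ 0, and fᵀν° = −1 (a Farkas certificate that {y ≥ 0 : Ey = f} is empty). Then (ŷ, τ̂) = (0, 0) with multipliers (ν̂, ξ̂, ω̂) = (θν°, θξ°, 0) satisfies the HQP KKT conditions: Cŷ + τ̂c + Eᵀν̂ − ξ̂ = 0, θτ̂ − θ + cᵀŷ − fᵀν̂ − ω̂ = 0, Eŷ = fτ̂, 0 ≤ ŷ ⊥ ξ̂ ≥ 0, 0 ≤ τ̂ ⊥ ω̂ ≥ 0. -/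
open Matrix

/-- A Farkas infeasibility certificate for the QP yields an HQP KKT point at
(ŷ, τ̂) = (0, 0) with multipliers (θν°, θξ°, 0). -/
theorem infeasibility_cert_to_hqp_kkt (n m : ℕ)
    (C : Matrix (Fin n) (Fin n) ℝ) (hC : C.IsSymm)
    (c : Fin n → ℝ) (E : Matrix (Fin m) (Fin n) ℝ) (f : Fin m → ℝ)
    (θ : ℝ) (hθ : 0 < θ)
    (νc : Fin m → ℝ) (ξc : Fin n → ℝ)
    (hcert1 : Eᵀ *ᵥ νc - ξc = 0) (hcert2 : 0 ≤ ξc) (hcert3 : f ⬝ᵥ νc = -1) :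
    C *ᵥ (0 : Fin n → ℝ) + (0 : ℝ) • c + Eᵀ *ᵥ (θ • νc) - θ • ξc = 0 ∧
    θ * 0 - θ + c ⬝ᵥ (0 : Fin n → ℝ) - f ⬝ᵥ (θ • νc) - 0 = 0 ∧
    E *ᵥ (0 : Fin n → ℝ) = (0 : ℝ) • f ∧
    0 ≤ (0 : Fin n → ℝ) ∧ 0 ≤ θ • ξc ∧ (0 : Fin n → ℝ) ⬝ᵥ (θ • ξc) = 0 ∧
    (0 : ℝ) ≤ 0 ∧ (0 : ℝ) ≤ 0 ∧ (0 : ℝ) * 0 = 0 := by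
  refine ⟨?_, ?_, ?_, le_refl _, smul_nonneg hθ.le hcert2, ?_, le_refl _, le_refl _, mul_zero 0⟩
  · simp only [mulVec_smul, mulVec_zero, zero_smul, zero_add, add_zero]
    rw [← smul_sub, hcert1, smul_zero]
  · rw [dotProduct_smul, hcert3]
    simp [smul_eq_mul]
  · simp
  · simp [dotProduct]
end

section
/- Suppose (ŷ, τ̂) = (0,0) with multipliers (ν̂, ξ̂, ω̂) satisfies the HQP KKT conditions (so Eᵀν̂ = ξ̂, −θ − fᵀν̂ − ω̂ = 0, ξ̂ ≥ 0, ω̂ ≥ 0) and θ > 0. Then (ν°, ξ°) = (ν̂/(θ+ω̂), ξ̂/(θ+ω̂)) satisfies Eᵀν° − ξ° = 0, ξ° ≥ 0, fᵀν° = −1, certifying infeasibility of {y ≥ 0 : Ey = f}. -/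
open Matrix

/-- From an HQP KKT point at (ŷ, τ̂) = (0,0), rescaling the multipliers by
1/(θ+ω̂) produces a Farkas certificate of infeasibility of {y ≥ 0 : Ey = f}. -/
theorem hqp_kkt_zero_to_infeasibility_cert (n m : ℕ)
    (E : Matrix (Fin m) (Fin n) ℝ) (f : Fin m → ℝ)
    (θ : ℝ) (hθ : 0 < θ)
    (νh : Fin m → ℝ) (ξh : Fin n → ℝ) (ωh : ℝ)
    (hdual1 : Eᵀ *ᵥ νh - ξh = 0)
    (hdual2 : -θ - f ⬝ᵥ νh - ωh = 0)
    (hξ : 0 ≤ ξh) (hω : 0 ≤ ωh) :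
    Eᵀ *ᵥ ((θ + ωh)⁻¹ • νh) - (θ + ωh)⁻¹ • ξh = 0 ∧
    0 ≤ (θ + ωh)⁻¹ • ξh ∧
    f ⬝ᵥ ((θ + ωh)⁻¹ • νh) = -1 := by
  have hpos : (0:ℝ) < θ + ωh := by linarith
  have hne : (θ + ωh) ≠ 0 := ne_of_gt hpos
  refine ⟨?_, ?_, ?_⟩
  · rw [mulVec_smul, ← smul_sub, hdual1, smul_zero]
  · intro i
    exact mul_nonneg (inv_nonneg.mpr hpos.le) (hξ i)
  · rw [dotProduct_smul]
    have : f ⬝ᵥ νh = -(θ + ωh) := by linarith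
    rw [this]
    rw [smul_eq_mul]
    field_simp
end

section
/- If x, s ∈ ℝ^{n+1} satisfy x > 0, s > 0, and the centrality condition x_i s_i ≥ γ μ for all i, where μ = xᵀs/(n+1) and γ ∈ (0,1), then ‖(XS)^{−1/2}(Xs − σμe)‖² ≤ (1 − 2σ + σ²/γ)(n+1)μ for any σ ∈ (0,1), where X = Diag(x), S = Diag(s), e is the all-ones vector. -/
open Matrix

/-- Standard interior-point neighborhood bound:
‖(XS)^{−1/2}(Xs − σμe)‖² ≤ (1 − 2σ + σ²/γ)(n+1)μ. -/
theorem neighborhood_bound (n : ℕ)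
    (x s : Fin (n + 1) → ℝ)
    (hx : ∀ i, 0 < x i) (hs : ∀ i, 0 < s i)
    (γ σ : ℝ) (hγ : γ ∈ Set.Ioo (0 : ℝ) 1) (hσ : σ ∈ Set.Ioo (0 : ℝ) 1)
    (hcent : ∀ i, x i * s i ≥ γ * (x ⬝ᵥ s / (n + 1))) :
    ∑ i, (x i * s i - σ * (x ⬝ᵥ s / (n + 1))) ^ 2 / (x i * s i) ≤
      (1 - 2 * σ + σ ^ 2 / γ) * (n + 1) * (x ⬝ᵥ s / (n + 1)) := by
  obtain ⟨hγ0, hγ1⟩ := hγ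
  set μ : ℝ := x ⬝ᵥ s / (n + 1) with hμdef
  have hdot : x ⬝ᵥ s = ∑ i, x i * s i := rfl
  have hsum_pos : 0 < ∑ i, x i * s i :=
    Finset.sum_pos (fun i _ => mul_pos (hx i) (hs i)) ⟨0, Finset.mem_univ 0⟩
  have hn1 : (0:ℝ) < (n:ℝ) + 1 := by positivity
  have hμ : 0 < μ := by
    rw [hμdef, hdot]; exact div_pos hsum_pos hn1
  have hsum : ∑ i, x i * s i = ((n:ℝ) + 1) * μ := by
    rw [hμdef, hdot]; field_simp
  have hterm : ∀ i ∈ Finset.univ, (x i * s i - σ * μ) ^ 2 / (x i * s i) ≤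
      x i * s i - 2 * σ * μ + σ ^ 2 * μ / γ := by
    intro i _
    have ht : 0 < x i * s i := mul_pos (hx i) (hs i)
    have h1 : (x i * s i - σ * μ) ^ 2 / (x i * s i) =
        x i * s i - 2 * σ * μ + (σ * μ) ^ 2 / (x i * s i) := by
      field_simp [(hx i).ne', (hs i).ne']; ring
    rw [h1]
    have h2 : (σ * μ) ^ 2 / (x i * s i) ≤ (σ * μ) ^ 2 / (γ * μ) :=
      div_le_div_of_nonneg_left (by positivity) (by positivity) (hcent i)
    have h3 : (σ * μ) ^ 2 / (γ * μ) = σ ^ 2 * μ / γ := by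
      field_simp
    linarith [h2, h3 ▸ h2]
  calc ∑ i, (x i * s i - σ * μ) ^ 2 / (x i * s i)
      ≤ ∑ i : Fin (n+1), (x i * s i - 2 * σ * μ + σ ^ 2 * μ / γ) :=
        Finset.sum_le_sum hterm
    _ = (∑ i, x i * s i) + ((n:ℝ) + 1) * (- 2 * σ * μ + σ ^ 2 * μ / γ) := by
        rw [Finset.sum_add_distrib, Finset.sum_sub_distrib, Finset.sum_const, Finset.sum_const,
          Finset.card_univ, Fintype.card_fin]
        push_cast; ring
    _ = (1 - 2 * σ + σ ^ 2 / γ) * ((n:ℝ) + 1) * μ := by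
        rw [hsum]; field_simp; ring
    _ = (1 - 2 * σ + σ ^ 2 / γ) * (↑n + 1) * μ := by norm_num
end
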